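/- For 0 < s₁ ≤ s₂, define α₄ = s₁/s₂, α₃ = ((1+s₂)log(1+1/s₂) − 1)/((1+s₁)log(1+1/s₁) − 1), α₂ = (s₂ log(1+1/s₂) − 1)/(s₁ log(1+1/s₁) − 1), α₁ = (1+s₁)/(1+s₂). Then α₄ ≤ α₃ ≤ α₂ ≤ α₁ ≤ 1. -/

import Mathlib

open Real Set



-- log lower bound: 2t/(t+2) ≤ log(1+t) for t ≥ 0
lemma log_lb {t : ℝ} (ht : 0 ≤ t) : 2*t/(t+2) ≤ Real.log (1+t) := by
  have key : MonotoneOn (fun t => Real.log (1+t) - 2*t/(t+2)) (Ici (0:ℝ)) := by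
    have hd : ∀ x ∈ Ioi (0:ℝ), HasDerivAt (fun t => Real.log (1+t) - 2*t/(t+2))
        (1/(1+x) - 4/(x+2)^2) x := by
      intro x hx
      have hx0 : (0:ℝ) < x := hx
      have h1 : HasDerivAt (fun t : ℝ => 1 + t) 1 x := (hasDerivAt_id x).const_add 1
      have hlog : HasDerivAt (fun t : ℝ => Real.log (1+t)) (1/(1+x)) x := by
        simpa using h1.log (by positivity)
      have h2 : HasDerivAt (fun t : ℝ => 2*t) 2 x := by
        simpa using (hasDerivAt_id x).const_mul 2
      have h3 : HasDerivAt (fun t : ℝ => t+2) 1 x := (hasDerivAt_id x).add_const 2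
      have hdiv : HasDerivAt (fun t : ℝ => 2*t/(t+2)) ((2*(x+2) - 2*x*1)/(x+2)^2) x :=
        h2.div h3 (by positivity)
      have : (2*(x+2) - 2*x*1)/(x+2)^2 = 4/(x+2)^2 := by ring_nf
      rw [this] at hdiv
      exact hlog.sub hdiv
    apply monotoneOn_of_deriv_nonneg (convex_Ici 0)
    · apply ContinuousOn.sub
      · apply ContinuousOn.log (by fun_prop)
        intro x hx; simp only [mem_Ici] at hx; positivity
      · apply ContinuousOn.div (by fun_prop) (by fun_prop)
        intro x hx; simp only [mem_Ici] at hx; positivity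
    · intro x hx
      rw [interior_Ici] at hx
      exact (hd x hx).differentiableAt.differentiableWithinAt
    · intro x hx
      rw [interior_Ici] at hx
      rw [(hd x hx).deriv]
      have hx0 : (0:ℝ) < x := hx
      rw [sub_nonneg, div_le_div_iff₀ (by positivity) (by positivity)]
      nlinarith [sq_nonneg x]
  have := key (self_mem_Ici) (mem_Ici.2 ht) ht
  simp only at this
  norm_num at this
  linarith [this]

-- 2 log x ≤ x - 1/x for x ≥ 1
lemma log_ub {x : ℝ} (hx : 1 ≤ x) : 2 * Real.log x ≤ x - 1/x := by
  have key : MonotoneOn (fun x => x - 1/x - 2 * Real.log x) (Ici (1:ℝ)) := by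
    have hd : ∀ y ∈ Ioi (1:ℝ), HasDerivAt (fun x => x - 1/x - 2 * Real.log x)
        (1 - (-1/y^2) - 2 * (1/y)) y := by
      intro y hy
      have hy0 : (0:ℝ) < y := lt_trans one_pos hy
      have h1 : HasDerivAt (fun x : ℝ => 1/x) (-1/y^2) y := by
        simpa [one_div, neg_div] using (hasDerivAt_inv (ne_of_gt hy0))
      have h2 : HasDerivAt (fun x : ℝ => 2 * Real.log x) (2 * (1/y)) y := by
        simpa [one_div] using (Real.hasDerivAt_log (ne_of_gt hy0)).const_mul 2
      exact ((hasDerivAt_id y).sub h1).sub h2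
    apply monotoneOn_of_deriv_nonneg (convex_Ici 1)
    · apply ContinuousOn.sub
      · apply ContinuousOn.sub (by fun_prop)
        apply ContinuousOn.div (by fun_prop) (by fun_prop)
        intro x hx; simp only [mem_Ici] at hx; positivity
      · apply ContinuousOn.mul (by fun_prop)
        apply ContinuousOn.log (by fun_prop)
        intro x hx; simp only [mem_Ici] at hx; positivity
    · intro y hy
      rw [interior_Ici] at hy
      exact (hd y hy).differentiableAt.differentiableWithinAt
    · intro y hy
      rw [interior_Ici] at hy
      rw [(hd y hy).deriv]
      have hy0 : (0:ℝ) < y := lt_trans one_pos hy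
      have hy1 : (1:ℝ) < y := hy
      have e : 1 - -1/y^2 - 2*(1/y) = (y-1)^2/y^2 := by field_simp; ring
      nlinarith [div_nonneg (sq_nonneg (y-1)) (sq_nonneg y)]
  have := key (self_mem_Ici) (mem_Ici.2 hx) hx
  simp only [Real.log_one, one_div] at this
  norm_num at this
  rw [one_div]
  linarith

lemma keyA {s : ℝ} (hs : 0 < s) : 2 ≤ (1+2*s) * (Real.log (s+1) - Real.log s) := by
  have h := log_lb (le_of_lt (by positivity : (0:ℝ) < 1/s))
  rw [show (1:ℝ)+1/s = (s+1)/s by field_simp, Real.log_div (by positivity) (ne_of_gt hs)] at h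
  have e : 2*(1/s)/(1/s+2) = 2/(1+2*s) := by
    rw [div_eq_div_iff (by positivity) (by positivity)]; field_simp
  rw [e, div_le_iff₀ (by positivity)] at h
  linarith

lemma keyB {s : ℝ} (hs : 0 < s) : s*(s+1)*(Real.log (s+1) - Real.log s)^2 ≤ 1 := by
  set L := Real.log (s+1) - Real.log s with hLdef
  set x := Real.sqrt ((s+1)/s) with hxdef
  have hx2 : x^2 = (s+1)/s := Real.sq_sqrt (by positivity)
  have hx0 : 0 < x := Real.sqrt_pos.2 (by positivity)
  have hx1 : 1 ≤ x := by
    rw [hxdef, Real.one_le_sqrt]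
    rw [le_div_iff₀ hs]; linarith
  have hL0 : 0 ≤ L := by
    rw [hLdef, sub_nonneg]
    exact Real.log_le_log hs (by linarith)
  have hlogx : 2 * Real.log x = L := by
    rw [hxdef, Real.log_sqrt (by positivity), Real.log_div (by positivity) (ne_of_gt hs)]
    ring
  have hub := log_ub hx1
  rw [hlogx] at hub
  -- L ≤ x - 1/x, so L*x ≤ x^2 - 1 = 1/s, so L*x*s ≤ 1
  have hLxs : L*x*s ≤ 1 := by
    have h1 : L*x ≤ (x - 1/x)*x := mul_le_mul_of_nonneg_right hub hx0.le
    have h2 : (x - 1/x)*x = x^2 - 1 := by field_simp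
    have h3 : x^2 - 1 = 1/s := by rw [hx2]; field_simp; ring
    have h4 : L*x ≤ 1/s := by rw [h2, h3] at h1; exact h1
    calc L*x*s ≤ (1/s)*s := mul_le_mul_of_nonneg_right h4 hs.le
    _ = 1 := by field_simp
  have hLxs0 : 0 ≤ L*x*s := by positivity
  have hsq : (L*x*s)*(L*x*s) ≤ 1 := by nlinarith
  have hx2s : x^2 * s = s + 1 := by rw [hx2]; field_simp
  have : s*(s+1)*L^2 = (L*x*s)*(L*x*s) := by rw [← hx2s]; ring
  linarith [this ▸ hsq]

lemma hasDerivAt_L {s : ℝ} (hs : 0 < s) :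
    HasDerivAt (fun s : ℝ => Real.log (s+1) - Real.log s) (1/(s+1) - 1/s) s := by
  have h1 : HasDerivAt (fun t : ℝ => Real.log (t+1)) (1/(s+1)) s := by
    simpa using ((hasDerivAt_id s).add_const 1).log (by positivity)
  have h2 : HasDerivAt Real.log (1/s) s := by
    simpa [one_div] using Real.hasDerivAt_log (ne_of_gt hs)
  exact h1.sub h2

lemma contOn_L : ContinuousOn (fun s : ℝ => Real.log (s+1) - Real.log s) (Ioi 0) := by
  apply ContinuousOn.sub
  · apply ContinuousOn.log (by fun_prop)
    intro x hx; simp only [mem_Ioi] at hx; positivity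
  · apply ContinuousOn.log (by fun_prop)
    intro x hx; simp only [mem_Ioi] at hx; positivity

lemma L_pos {s : ℝ} (hs : 0 < s) : 0 < Real.log (s+1) - Real.log s :=
  sub_pos.2 (Real.log_lt_log hs (by linarith))

lemma phi_mono : MonotoneOn (fun s => s*(1+s)*(Real.log (s+1) - Real.log s) - s) (Ioi (0:ℝ)) := by
  have hd : ∀ s ∈ Ioi (0:ℝ), HasDerivAt (fun s => s*(1+s)*(Real.log (s+1) - Real.log s) - s)
      ((1*(1+s)+s*1)*(Real.log (s+1) - Real.log s) + s*(1+s)*(1/(s+1) - 1/s) - 1) s := by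
    intro s hs
    have hs0 : (0:ℝ) < s := hs
    have hm : HasDerivAt (fun s : ℝ => s*(1+s)) (1*(1+s)+s*1) s :=
      (hasDerivAt_id s).mul ((hasDerivAt_id s).const_add 1)
    exact ((hm.mul (hasDerivAt_L hs0)).sub (hasDerivAt_id s))
  apply monotoneOn_of_deriv_nonneg (convex_Ioi 0)
  · exact ((continuousOn_id.mul (by fun_prop)).mul contOn_L).sub continuousOn_id
  · intro s hs
    rw [interior_Ioi] at hs
    exact (hd s hs).differentiableAt.differentiableWithinAt
  · intro s hs
    rw [interior_Ioi] at hs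
    rw [(hd s hs).deriv]
    have hs0 : (0:ℝ) < s := hs
    have e : (1*(1+s)+s*1)*(Real.log (s+1) - Real.log s) + s*(1+s)*(1/(s+1) - 1/s) - 1
        = (1+2*s)*(Real.log (s+1) - Real.log s) - 2 := by field_simp; ring
    rw [e, sub_nonneg]
    exact keyA hs0

lemma U_mono : MonotoneOn (fun s => (Real.log (s+1) - Real.log s)⁻¹ - s) (Ioi (0:ℝ)) := by
  have hd : ∀ s ∈ Ioi (0:ℝ), HasDerivAt (fun s => (Real.log (s+1) - Real.log s)⁻¹ - s)
      (-(1/(s+1) - 1/s)/(Real.log (s+1) - Real.log s)^2 - 1) s := by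
    intro s hs
    have hs0 : (0:ℝ) < s := hs
    exact ((hasDerivAt_L hs0).inv (ne_of_gt (L_pos hs0))).sub (hasDerivAt_id s)
  apply monotoneOn_of_deriv_nonneg (convex_Ioi 0)
  · exact (contOn_L.inv₀ (fun x hx => ne_of_gt (L_pos hx))).sub continuousOn_id
  · intro s hs
    rw [interior_Ioi] at hs
    exact (hd s hs).differentiableAt.differentiableWithinAt
  · intro s hs
    rw [interior_Ioi] at hs
    rw [(hd s hs).deriv]
    have hs0 : (0:ℝ) < s := hs
    have hL := L_pos hs0
    have e : -(1/(s+1) - 1/s) = 1/(s*(s+1)) := by field_simp; ring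
    rw [e, sub_nonneg, le_div_iff₀ (pow_pos hL 2), one_mul,
      le_div_iff₀ (by positivity : (0:ℝ) < s*(s+1))]
    nlinarith [keyB hs0]

lemma key2 {a b u v : ℝ} (hu : 0 < u) (hv : 0 < v) (h : u⁻¹ - a ≤ v⁻¹ - b) :
    v*(1 - a*u) ≤ u*(1 - b*v) := by
  have hm := mul_le_mul_of_nonneg_right h (le_of_lt (mul_pos hu hv))
  have c1 : u⁻¹*(u*v) = v := by field_simp
  have c2 : v⁻¹*(u*v) = u := by field_simp
  nlinarith [hm, c1, c2]

lemma psi_anti : AntitoneOn (fun s => (1+s)*(1 - s*(Real.log (s+1) - Real.log s))) (Ioi (0:ℝ)) := by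
  have hd : ∀ s ∈ Ioi (0:ℝ), HasDerivAt (fun s => (1+s)*(1 - s*(Real.log (s+1) - Real.log s)))
      (1*(1 - s*(Real.log (s+1) - Real.log s)) +
        (1+s)*(0 - (1*(Real.log (s+1) - Real.log s) + s*(1/(s+1) - 1/s)))) s := by
    intro s hs
    have hs0 : (0:ℝ) < s := hs
    have hin : HasDerivAt (fun s : ℝ => 1 - s*(Real.log (s+1) - Real.log s))
        (0 - (1*(Real.log (s+1) - Real.log s) + s*(1/(s+1) - 1/s))) s :=
      (hasDerivAt_const s 1).sub ((hasDerivAt_id s).mul (hasDerivAt_L hs0))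
    exact ((hasDerivAt_id s).const_add 1).mul hin
  apply antitoneOn_of_deriv_nonpos (convex_Ioi 0)
  · exact (by fun_prop : ContinuousOn (fun s : ℝ => 1+s) (Ioi 0)).mul
      (continuousOn_const.sub (continuousOn_id.mul contOn_L))
  · intro s hs
    rw [interior_Ioi] at hs
    exact (hd s hs).differentiableAt.differentiableWithinAt
  · intro s hs
    rw [interior_Ioi] at hs
    rw [(hd s hs).deriv]
    have hs0 : (0:ℝ) < s := hs
    have e : 1*(1 - s*(Real.log (s+1) - Real.log s)) +
        (1+s)*(0 - (1*(Real.log (s+1) - Real.log s) + s*(1/(s+1) - 1/s)))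
        = 2 - (1+2*s)*(Real.log (s+1) - Real.log s) := by field_simp; ring
    rw [e, sub_nonpos]
    exact keyA hs0

lemma f_pos {s : ℝ} (hs : 0 < s) : 0 < (1+s)*(Real.log (s+1) - Real.log s) - 1 := by
  have h := Real.log_lt_sub_one_of_pos (show (0:ℝ) < s/(s+1) by positivity)
    (by intro hc; rw [div_eq_one_iff_eq (by positivity)] at hc; linarith)
  rw [Real.log_div (ne_of_gt hs) (by positivity)] at h
  have e : s/(s+1) - 1 = -(1/(s+1)) := by field_simp; ring
  rw [e] at h
  have h2 : 1/(s+1) < Real.log (s+1) - Real.log s := by linarith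
  have := (div_lt_iff₀ (show (0:ℝ) < s+1 by positivity)).1 (by rw [one_div] at h2 ⊢; exact h2)
  nlinarith

lemma g_lt {s : ℝ} (hs : 0 < s) : s*(Real.log (s+1) - Real.log s) < 1 := by
  have h := Real.log_lt_sub_one_of_pos (show (0:ℝ) < (s+1)/s by positivity)
    (by intro hc; rw [div_eq_one_iff_eq (ne_of_gt hs)] at hc; linarith)
  rw [Real.log_div (by positivity) (ne_of_gt hs)] at h
  have e : (s+1)/s - 1 = 1/s := by field_simp; ring
  rw [e] at h
  have := (lt_div_iff₀ hs).1 h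
  nlinarith

theorem breakpoints_order (s₁ s₂ : ℝ) (h1 : 0 < s₁) (h12 : s₁ ≤ s₂) :
    s₁ / s₂ ≤ ((1 + s₂) * Real.log (1 + 1 / s₂) - 1) / ((1 + s₁) * Real.log (1 + 1 / s₁) - 1) ∧
    ((1 + s₂) * Real.log (1 + 1 / s₂) - 1) / ((1 + s₁) * Real.log (1 + 1 / s₁) - 1) ≤
      (s₂ * Real.log (1 + 1 / s₂) - 1) / (s₁ * Real.log (1 + 1 / s₁) - 1) ∧
    (s₂ * Real.log (1 + 1 / s₂) - 1) / (s₁ * Real.log (1 + 1 / s₁) - 1) ≤ (1 + s₁) / (1 + s₂) ∧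
    (1 + s₁) / (1 + s₂) ≤ 1 := by
  have h2 : 0 < s₂ := lt_of_lt_of_le h1 h12
  have hl1 : Real.log (1 + 1/s₁) = Real.log (s₁+1) - Real.log s₁ := by
    rw [show (1:ℝ)+1/s₁ = (s₁+1)/s₁ by field_simp, Real.log_div (by positivity) (ne_of_gt h1)]
  have hl2 : Real.log (1 + 1/s₂) = Real.log (s₂+1) - Real.log s₂ := by
    rw [show (1:ℝ)+1/s₂ = (s₂+1)/s₂ by field_simp, Real.log_div (by positivity) (ne_of_gt h2)]
  rw [hl1, hl2]
  set L₁ := Real.log (s₁+1) - Real.log s₁ with hL1def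
  set L₂ := Real.log (s₂+1) - Real.log s₂ with hL2def
  have hL1 : 0 < L₁ := L_pos h1
  have hL2 : 0 < L₂ := L_pos h2
  have hf1 : 0 < (1+s₁)*L₁ - 1 := f_pos h1
  have hf2 : 0 < (1+s₂)*L₂ - 1 := f_pos h2
  have hg1 : s₁*L₁ < 1 := g_lt h1
  have hg2 : s₂*L₂ < 1 := g_lt h2
  have hm1 : s₁ ∈ Ioi (0:ℝ) := h1
  have hm2 : s₂ ∈ Ioi (0:ℝ) := h2
  refine ⟨?_, ?_, ?_, ?_⟩
  · rw [div_le_div_iff₀ h2 hf1]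
    have := phi_mono hm1 hm2 h12
    simp only at this
    rw [← hL1def, ← hL2def] at this
    nlinarith [this]
  · have hrw : (s₂*L₂ - 1)/(s₁*L₁ - 1) = (1 - s₂*L₂)/(1 - s₁*L₁) := by
      rw [← neg_div_neg_eq]; ring_nf
    rw [hrw, div_le_div_iff₀ hf1 (by linarith : (0:ℝ) < 1 - s₁*L₁)]
    have hU := U_mono hm1 hm2 h12
    simp only at hU
    rw [← hL1def, ← hL2def] at hU
    have key : L₂*(1 - s₁*L₁) ≤ L₁*(1 - s₂*L₂) := key2 hL1 hL2 hU
    nlinarith [key]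
  · have hrw : (s₂*L₂ - 1)/(s₁*L₁ - 1) = (1 - s₂*L₂)/(1 - s₁*L₁) := by
      rw [← neg_div_neg_eq]; ring_nf
    rw [hrw, div_le_div_iff₀ (by linarith : (0:ℝ) < 1 - s₁*L₁) (by positivity : (0:ℝ) < 1+s₂)]
    have := psi_anti hm1 hm2 h12
    simp only at this
    rw [← hL1def, ← hL2def] at this
    nlinarith [this]
  · rw [div_le_one (by positivity)]
    linarith
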